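/- arXiv:1704.03745 — 2 statements merged into one kernel-verified Lean document; each statement's English description precedes it below -/
import Mathlib

section
/- Let μ = ν^ℤ be a product probability measure on Ω = X^ℤ with L²(ν) separable. If f ∈ L²(μ) is local with ∫f dμ = 0 and ∑_{z ∈ ℤ} ⟨f, τ_z f⟩_{L²(μ)} = 0, then there exists a local g ∈ L²(μ) with ∫g dμ = 0 such that f = τg − g, where τ = τ_1 is the unit shift. -/
set_option linter.unusedSectionVars false
set_option maxHeartbeats 1000000


open MeasureTheory ProbabilityTheory

/-- A function on `X^ℤ` is local if it depends only on finitely many coordinates. -/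
def IsLocal {X : Type*} (f : (ℤ → X) → ℝ) : Prop :=
  ∃ S : Finset ℤ, ∀ η η' : ℤ → X, (∀ x ∈ S, η x = η' x) → f η = f η'

/-- `μ` is the i.i.d. product measure `ν^ℤ` on `X^ℤ`. -/
def IsIIDProduct {X : Type*} [MeasurableSpace X] (ν : Measure X)
    (μ : Measure (ℤ → X)) : Prop :=
  iIndepFun (fun x η => η x) μ ∧
  ∀ x : ℤ, μ.map (fun η => η x) = ν

namespace St12

/-! ### generic helpers -/

lemma sq_integral_le {α : Type*} [MeasurableSpace α] (m : Measure α) [IsProbabilityMeasure m]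
    {v : α → ℝ} (hv : AEStronglyMeasurable v m) (h2 : Integrable (fun x => v x ^ 2) m) :
    (∫ x, v x ∂m) ^ 2 ≤ ∫ x, v x ^ 2 ∂m := by
  have hvi : Integrable v m :=
    ((memLp_two_iff_integrable_sq hv).mpr h2).integrable one_le_two
  set c := ∫ x, v x ∂m with hc
  have h0 : 0 ≤ ∫ x, (v x - c) ^ 2 ∂m := integral_nonneg fun x => sq_nonneg _
  have hexp : (fun x => (v x - c) ^ 2) = fun x => (v x ^ 2 - (2 * c) * v x) + c ^ 2 := by
    funext x; ring
  have hi2 : Integrable (fun x => v x ^ 2 - (2 * c) * v x) m := by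
    have := h2.sub (hvi.const_mul (2 * c))
    exact this
  rw [hexp, integral_add hi2 (integrable_const _),
    integral_sub h2 (hvi.const_mul _), integral_const_mul, integral_const] at h0
  simp only [measure_univ, ENNReal.toReal_one, probReal_univ, one_smul, ← hc] at h0
  nlinarith [h0]

lemma integrable_mul_L2 {α : Type*} [MeasurableSpace α] {m : Measure α}
    {u v : α → ℝ} (hu : MemLp u 2 m) (hv : MemLp v 2 m) :
    Integrable (fun x => u x * v x) m := by
  have hbi : Integrable (fun x => (u x ^ 2 + v x ^ 2) / 2) m := by
    have := (hu.integrable_sq.add hv.integrable_sq).div_const 2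
    simpa using this
  refine Integrable.mono' hbi
    (hu.aestronglyMeasurable.mul hv.aestronglyMeasurable)
    (Filter.Eventually.of_forall fun x => ?_)
  have h := two_mul_le_add_sq (|u x|) (|v x|)
  rw [Real.norm_eq_abs, abs_mul]
  rw [sq_abs, sq_abs] at h
  nlinarith [abs_nonneg (u x), abs_nonneg (v x)]

lemma telescope_Icc (G : ℤ → ℝ) (a : ℤ) :
    ∀ n : ℕ, ∑ k ∈ Finset.Icc a (a + n), (G k - G (k - 1)) = G (a + n) - G (a - 1) := by
  intro n
  induction n with
  | zero => simp
  | succ n ih =>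
    have h1 : (a : ℤ) + (n + 1 : ℕ) = (a + n) + 1 := by push_cast; ring
    have h2 : Finset.Icc a (a + (n : ℤ) + 1) = insert (a + (n : ℤ) + 1) (Finset.Icc a (a + n)) := by
      ext x; simp only [Finset.mem_Icc, Finset.mem_insert]; omega
    rw [h1, h2, Finset.sum_insert (by simp [Finset.mem_Icc]), ih]
    simp only [add_sub_cancel_right]
    ring

/-! ### shifts and merges -/

variable {X : Type*} [MeasurableSpace X]

def shf (z : ℤ) (η : ℤ → X) : ℤ → X := fun x => η (x + z)

lemma measurable_shf (z : ℤ) : Measurable (shf (X := X) z) :=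
  measurable_pi_lambda _ fun _ => measurable_pi_apply _

lemma shf_shf (z w : ℤ) (η : ℤ → X) : shf z (shf w η) = shf (w + z) η := by
  funext x; simp only [shf]; ring_nf

def shfE (z : ℤ) : (ℤ → X) ≃ᵐ (ℤ → X) where
  toFun := shf z
  invFun := shf (-z)
  left_inv := fun η => by funext x; simp [shf]
  right_inv := fun η => by funext x; simp [shf]
  measurable_toFun := measurable_shf z
  measurable_invFun := measurable_shf (-z)

def mrg (A : ℤ → Prop) [DecidablePred A] (p : (ℤ → X) × (ℤ → X)) : ℤ → X :=
  fun x => if A x then p.1 x else p.2 x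

lemma measurable_mrg (A : ℤ → Prop) [DecidablePred A] : Measurable (mrg (X := X) A) := by
  apply measurable_pi_lambda
  intro x
  by_cases h : A x <;> simp only [mrg, h, if_true, if_false]
  · exact (measurable_pi_apply x).comp measurable_fst
  · exact (measurable_pi_apply x).comp measurable_snd

def boxSet (S : Finset ℤ) (B : ℤ → Set X) : Set (ℤ → X) := {η | ∀ x ∈ S, η x ∈ B x}

lemma boxSet_eq (S : Finset ℤ) (B : ℤ → Set X) :
    boxSet S B = ⋂ x ∈ S, (fun η : ℤ → X => η x) ⁻¹' (B x) := by
  ext η; simp [boxSet]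

lemma measurableSet_boxSet (S : Finset ℤ) (B : ℤ → Set X) (hB : ∀ x, MeasurableSet (B x)) :
    MeasurableSet (boxSet S B) := by
  rw [boxSet_eq]
  exact MeasurableSet.biInter (S : Set ℤ).to_countable
    fun x _ => (measurable_pi_apply x) (hB x)

/-! ### measure-theoretic core -/

variable {ν : Measure X} [IsProbabilityMeasure ν]
  {μ : Measure (ℤ → X)} [IsProbabilityMeasure μ]

lemma meas_boxSet (hμ : IsIIDProduct ν μ) (S : Finset ℤ) (B : ℤ → Set X)
    (hB : ∀ x, MeasurableSet (B x)) : μ (boxSet S B) = ∏ x ∈ S, ν (B x) := by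
  rw [boxSet_eq, hμ.1.measure_inter_preimage_eq_mul S (fun i _ => hB i)]
  refine Finset.prod_congr rfl fun x _ => ?_
  rw [← hμ.2 x, Measure.map_apply (measurable_pi_apply x) (hB x)]

lemma map_restrict_eq (κ : Measure (ℤ → X)) [IsProbabilityMeasure κ]
    (h : ∀ S B, (∀ x, MeasurableSet (B x)) → κ (boxSet S B) = ∏ x ∈ S, ν (B x))
    (S : Finset ℤ) :
    κ.map (S.restrict) = Measure.pi (fun _ : S => ν) := by
  classical
  refine (Measure.pi_eq fun s hs => ?_).symm
  have hr : Measurable (S.restrict : (ℤ → X) → _) :=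
    measurable_pi_lambda _ fun i => measurable_pi_apply _
  rw [Measure.map_apply hr (MeasurableSet.univ_pi hs)]
  set B : ℤ → Set X := fun x => if hx : x ∈ S then s ⟨x, hx⟩ else Set.univ with hBdef
  have hpre : (S.restrict : (ℤ → X) → _) ⁻¹' (Set.univ.pi s) = boxSet S B := by
    ext η
    simp only [Set.mem_preimage, Set.mem_pi, Set.mem_univ, forall_true_left, boxSet,
      Set.mem_setOf_eq]
    constructor
    · intro hh x hx; simpa [hBdef, hx] using hh ⟨x, hx⟩
    · intro hh i; have := hh i i.2; simpa [hBdef, i.2] using this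
  rw [hpre, h S B (fun x => by by_cases hx : x ∈ S <;> simp [hBdef, hx, hs])]
  calc ∏ x ∈ S, ν (B x) = ∏ i ∈ S.attach, ν (B ↑i) := (Finset.prod_attach S _).symm
    _ = ∏ i ∈ S.attach, ν (s i) := Finset.prod_congr rfl (fun i _ => by
        simp only [hBdef, dif_pos i.2])
    _ = ∏ i : ↥S, ν (s i) := by rw [Finset.univ_eq_attach]

lemma eq_of_boxSet (hμ : IsIIDProduct ν μ) (κ : Measure (ℤ → X)) [IsProbabilityMeasure κ]
    (h : ∀ S B, (∀ x, MeasurableSet (B x)) → κ (boxSet S B) = ∏ x ∈ S, ν (B x)) : κ = μ := by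
  refine ext_of_generate_finite _ generateFrom_measurableCylinders.symm
    isPiSystem_measurableCylinders (fun s hs => ?_) (by simp)
  obtain ⟨S, t, ht, rfl⟩ := (mem_measurableCylinders s).mp hs
  have hr : Measurable (S.restrict : (ℤ → X) → _) :=
    measurable_pi_lambda _ fun i => measurable_pi_apply _
  have h1 : κ (cylinder S t) = (κ.map S.restrict) t := (Measure.map_apply hr ht).symm
  have h2 : μ (cylinder S t) = (μ.map S.restrict) t := (Measure.map_apply hr ht).symm
  rw [h1, h2, map_restrict_eq κ h S, map_restrict_eq μ (meas_boxSet hμ) S]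

lemma map_shf (hμ : IsIIDProduct ν μ) (z : ℤ) : μ.map (shf (X := X) z) = μ := by
  have : IsProbabilityMeasure (μ.map (shf (X := X) z)) :=
    Measure.isProbabilityMeasure_map (measurable_shf z).aemeasurable
  refine eq_of_boxSet hμ _ ?_
  intro S B hB
  rw [Measure.map_apply (measurable_shf z) (measurableSet_boxSet S B hB)]
  have hpre : shf (X := X) z ⁻¹' boxSet S B
      = boxSet (S.image (· + z)) (fun y => B (y - z)) := by
    ext η
    simp only [Set.mem_preimage, boxSet, Set.mem_setOf_eq, Finset.mem_image]
    constructor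
    · rintro hh y ⟨x, hx, rfl⟩
      simpa [shf] using hh x hx
    · intro hh x hx
      have := hh (x + z) ⟨x, hx, rfl⟩
      simpa [shf] using this
  rw [hpre, meas_boxSet hμ _ _ (fun y => hB (y - z)),
    Finset.prod_image (fun x _ y _ h => by omega)]
  exact Finset.prod_congr rfl fun x _ => by simp

lemma measurePreserving_shf (hμ : IsIIDProduct ν μ) (z : ℤ) :
    MeasurePreserving (shf (X := X) z) μ μ := ⟨measurable_shf z, map_shf hμ z⟩

lemma map_mrg (hμ : IsIIDProduct ν μ) (A : ℤ → Prop) [DecidablePred A] :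
    (μ.prod μ).map (mrg (X := X) A) = μ := by
  have : IsProbabilityMeasure ((μ.prod μ).map (mrg (X := X) A)) :=
    Measure.isProbabilityMeasure_map (measurable_mrg A).aemeasurable
  refine eq_of_boxSet hμ _ ?_
  intro S B hB
  rw [Measure.map_apply (measurable_mrg A) (measurableSet_boxSet S B hB)]
  have hpre : mrg (X := X) A ⁻¹' boxSet S B
      = (boxSet (S.filter A) B) ×ˢ (boxSet (S.filter (¬ A ·)) B) := by
    ext p
    simp only [Set.mem_preimage, boxSet, Set.mem_setOf_eq, Set.mem_prod, Finset.mem_filter,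
      mrg]
    constructor
    · intro hh
      constructor
      · rintro x ⟨hx, hAx⟩
        have := hh x hx; rwa [if_pos hAx] at this
      · rintro x ⟨hx, hAx⟩
        have := hh x hx; rwa [if_neg hAx] at this
    · rintro ⟨h1, h2⟩ x hx
      by_cases hAx : A x
      · rw [if_pos hAx]; exact h1 x ⟨hx, hAx⟩
      · rw [if_neg hAx]; exact h2 x ⟨hx, hAx⟩
  rw [hpre, Measure.prod_prod, meas_boxSet hμ _ _ hB, meas_boxSet hμ _ _ hB,
    Finset.prod_filter_mul_prod_filter_not]

/-! ### dependence predicates -/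

def DepLe (k : ℤ) (u : (ℤ → X) → ℝ) : Prop :=
  ∀ η η' : ℤ → X, (∀ x, x ≤ k → η x = η' x) → u η = u η'

def DepGe (k : ℤ) (u : (ℤ → X) → ℝ) : Prop :=
  ∀ η η' : ℤ → X, (∀ x, k ≤ x → η x = η' x) → u η = u η'

lemma DepLe.mono {k k' : ℤ} {u : (ℤ → X) → ℝ} (h : DepLe k u) (hk : k ≤ k') : DepLe k' u :=
  fun η η' hh => h η η' fun x hx => hh x (hx.trans hk)

lemma DepGe.mono {k k' : ℤ} {u : (ℤ → X) → ℝ} (h : DepGe k u) (hk : k' ≤ k) : DepGe k' u :=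
  fun η η' hh => h η η' fun x hx => hh x (hk.trans hx)

lemma DepLe.shf {k : ℤ} {u : (ℤ → X) → ℝ} (h : DepLe k u) (z : ℤ) :
    DepLe (k + z) (u ∘ shf z) :=
  fun η η' hh => h _ _ fun x hx => hh (x + z) (by omega)

lemma DepGe.shf {k : ℤ} {u : (ℤ → X) → ℝ} (h : DepGe k u) (z : ℤ) :
    DepGe (k + z) (u ∘ shf z) :=
  fun η η' hh => h _ _ fun x hx => hh (x + z) (by omega)

/-! ### conditioning operators -/

variable (μ) in
noncomputable def Qk (k : ℤ) (u : (ℤ → X) → ℝ) : (ℤ → X) → ℝ :=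
  fun η => ∫ ξ, u (mrg (· ≤ k) (η, ξ)) ∂μ

variable (μ) in
noncomputable def Pk (k : ℤ) (u : (ℤ → X) → ℝ) : (ℤ → X) → ℝ :=
  fun η => Qk μ k u η - Qk μ (k - 1) u η

lemma sm_Qk (k : ℤ) {u : (ℤ → X) → ℝ} (hu : StronglyMeasurable u) :
    StronglyMeasurable (Qk μ k u) :=
  (hu.comp_measurable (measurable_mrg _)).integral_prod_right'

lemma sm_Pk (k : ℤ) {u : (ℤ → X) → ℝ} (hu : StronglyMeasurable u) :
    StronglyMeasurable (Pk μ k u) :=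
  (sm_Qk k hu).sub (sm_Qk (k - 1) hu)

lemma depLe_Qk (k : ℤ) (u : (ℤ → X) → ℝ) : DepLe k (Qk μ k u) := by
  intro η η' hh
  have h : ∀ ξ : ℤ → X, u (mrg (· ≤ k) (η, ξ)) = u (mrg (· ≤ k) (η', ξ)) := by
    intro ξ; congr 1; funext x
    by_cases h : x ≤ k <;> simp [mrg, h, hh x]
  exact integral_congr_ae (Filter.Eventually.of_forall h)

lemma locOn_Qk {c k : ℤ} {u : (ℤ → X) → ℝ} (hu : DepGe c u) (η η' : ℤ → X)
    (hh : ∀ x, c ≤ x → x ≤ k → η x = η' x) : Qk μ k u η = Qk μ k u η' := by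
  have h : ∀ ξ : ℤ → X, u (mrg (· ≤ k) (η, ξ)) = u (mrg (· ≤ k) (η', ξ)) := by
    intro ξ
    refine hu _ _ fun x hx => ?_
    by_cases h : x ≤ k <;> simp [mrg, h, hh x hx]
  exact integral_congr_ae (Filter.Eventually.of_forall h)

lemma Qk_of_depLe {k : ℤ} {u : (ℤ → X) → ℝ} (hu : DepLe k u) (η : ℤ → X) :
    Qk μ k u η = u η := by
  have h : ∀ ξ : ℤ → X, u (mrg (· ≤ k) (η, ξ)) = u η :=
    fun ξ => hu _ _ fun x hx => by simp [mrg, hx]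
  simp only [Qk]
  rw [integral_congr_ae (Filter.Eventually.of_forall h), integral_const]
  simp

lemma Qk_of_depGe {k : ℤ} {u : (ℤ → X) → ℝ} (hu : DepGe (k + 1) u) (η : ℤ → X) :
    Qk μ k u η = ∫ ξ, u ξ ∂μ := by
  have h : ∀ ξ : ℤ → X, u (mrg (· ≤ k) (η, ξ)) = u ξ :=
    fun ξ => hu _ _ fun x hx => by simp only [mrg]; rw [if_neg (by omega)]
  simp only [Qk]
  rw [integral_congr_ae (Filter.Eventually.of_forall h)]

lemma Pk_of_depLe {k : ℤ} {u : (ℤ → X) → ℝ} (hu : DepLe (k - 1) u) (η : ℤ → X) :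
    Pk μ k u η = 0 := by
  simp only [Pk]
  rw [Qk_of_depLe (hu.mono (by omega)) η, Qk_of_depLe hu η, sub_self]

lemma Pk_of_depGe {k : ℤ} {u : (ℤ → X) → ℝ} (hu : DepGe (k + 1) u) (η : ℤ → X) :
    Pk μ k u η = 0 := by
  simp only [Pk]
  rw [Qk_of_depGe hu η, Qk_of_depGe (hu.mono (by omega)) η, sub_self]

lemma int_shf (hμ : IsIIDProduct ν μ) (z : ℤ) (u : (ℤ → X) → ℝ) :
    ∫ η, u (shf z η) ∂μ = ∫ η, u η ∂μ :=
  (measurePreserving_shf hμ z).integral_comp (MeasurableEquiv.measurableEmbedding (shfE z)) u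

lemma memℒp_shf (hμ : IsIIDProduct ν μ) (z : ℤ) {u : (ℤ → X) → ℝ} (h : MemLp u 2 μ) :
    MemLp (u ∘ shf z) 2 μ :=
  h.comp_measurePreserving (measurePreserving_shf hμ z)

lemma Qk_shf (hμ : IsIIDProduct ν μ) (k z : ℤ) {u : (ℤ → X) → ℝ}
    (hu : StronglyMeasurable u) (η : ℤ → X) :
    Qk μ (k + z) (u ∘ shf z) η = Qk μ k u (shf z η) := by
  have h1 : ∀ ξ : ℤ → X,
      (u ∘ shf z) (mrg (· ≤ k + z) (η, ξ)) = u (mrg (· ≤ k) (shf z η, shf z ξ)) := by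
    intro ξ
    simp only [Function.comp_apply]
    congr 1
    funext x
    simp only [shf, mrg]
    by_cases h : x ≤ k
    · rw [if_pos (by omega), if_pos h]
    · rw [if_neg (by omega), if_neg h]
  simp only [Qk]
  rw [integral_congr_ae (Filter.Eventually.of_forall h1)]
  exact (measurePreserving_shf hμ z).integral_comp
    (MeasurableEquiv.measurableEmbedding (shfE z))
    (fun ζ => u (mrg (· ≤ k) (shf z η, ζ)))

lemma Pk_shf (hμ : IsIIDProduct ν μ) (k z : ℤ) {u : (ℤ → X) → ℝ}
    (hu : StronglyMeasurable u) (η : ℤ → X) :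
    Pk μ (k + z) (u ∘ shf z) η = Pk μ k u (shf z η) := by
  simp only [Pk]
  rw [Qk_shf hμ k z hu η, show k + z - 1 = (k - 1) + z by ring,
    Qk_shf hμ (k - 1) z hu η]

lemma integral_mrg (hμ : IsIIDProduct ν μ) (A : ℤ → Prop) [DecidablePred A]
    {F : (ℤ → X) → ℝ} (hF : AEStronglyMeasurable F μ) :
    ∫ p, F (mrg A p) ∂(μ.prod μ) = ∫ η, F η ∂μ := by
  have h := integral_map (μ := μ.prod μ) (φ := mrg A) (measurable_mrg A).aemeasurable
    (f := F) ((map_mrg hμ A).symm ▸ hF)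
  rw [map_mrg hμ A] at h
  exact h.symm

lemma integrable_mrg (hμ : IsIIDProduct ν μ) (A : ℤ → Prop) [DecidablePred A]
    {F : (ℤ → X) → ℝ} (hF : AEStronglyMeasurable F μ) :
    Integrable (fun p => F (mrg A p)) (μ.prod μ) ↔ Integrable F μ := by
  have h := integrable_map_measure (μ := μ.prod μ) (f := mrg A) (g := F)
    ((map_mrg hμ A).symm ▸ hF) (measurable_mrg A).aemeasurable
  rw [map_mrg hμ A] at h
  exact h.symm

lemma key (hμ : IsIIDProduct ν μ) {k : ℤ} {u w : (ℤ → X) → ℝ}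
    (hu : StronglyMeasurable u) (hu2 : MemLp u 2 μ)
    (hw : StronglyMeasurable w) (hw2 : MemLp w 2 μ) (hwk : DepLe k w) :
    ∫ η, w η * Qk μ k u η ∂μ = ∫ η, w η * u η ∂μ := by
  have hint : Integrable (fun η => w η * u η) μ := integrable_mul_L2 hw2 hu2
  have hsm : AEStronglyMeasurable (fun η => w η * u η) μ :=
    hw.aestronglyMeasurable.mul hu.aestronglyMeasurable
  have h1 : ∫ η, w η * u η ∂μ
      = ∫ p, w (mrg (· ≤ k) p) * u (mrg (· ≤ k) p) ∂(μ.prod μ) :=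
    (integral_mrg hμ _ hsm).symm
  have hintp : Integrable (fun p => w (mrg (· ≤ k) p) * u (mrg (· ≤ k) p)) (μ.prod μ) :=
    (integrable_mrg hμ _ hsm).mpr hint
  rw [h1, MeasureTheory.integral_prod _ hintp]
  refine integral_congr_ae (Filter.Eventually.of_forall fun η => ?_)
  have hwm : ∀ ξ : ℤ → X, w η * u (mrg (· ≤ k) (η, ξ))
      = w (mrg (· ≤ k) (η, ξ)) * u (mrg (· ≤ k) (η, ξ)) := by
    intro ξ
    rw [hwk (mrg (· ≤ k) (η, ξ)) η (fun x hx => by simp [mrg, hx])]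
  show w η * Qk μ k u η = ∫ ξ, w (mrg (· ≤ k) (η, ξ)) * u (mrg (· ≤ k) (η, ξ)) ∂μ
  calc w η * Qk μ k u η = ∫ ξ, w η * u (mrg (· ≤ k) (η, ξ)) ∂μ := by
        simp only [Qk]; rw [integral_const_mul]
    _ = ∫ ξ, w (mrg (· ≤ k) (η, ξ)) * u (mrg (· ≤ k) (η, ξ)) ∂μ :=
        integral_congr_ae (Filter.Eventually.of_forall hwm)

lemma int_Qk (hμ : IsIIDProduct ν μ) (k : ℤ) {u : (ℤ → X) → ℝ}
    (hu : StronglyMeasurable u) (hui : Integrable u μ) :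
    ∫ η, Qk μ k u η ∂μ = ∫ η, u η ∂μ := by
  have hintp : Integrable (fun p => u (mrg (· ≤ k) p)) (μ.prod μ) :=
    (integrable_mrg hμ _ hu.aestronglyMeasurable).mpr hui
  calc ∫ η, Qk μ k u η ∂μ = ∫ p, u (mrg (· ≤ k) p) ∂(μ.prod μ) :=
        (MeasureTheory.integral_prod _ hintp).symm
    _ = ∫ η, u η ∂μ := integral_mrg hμ _ hu.aestronglyMeasurable

lemma int_mul_indep (hμ : IsIIDProduct ν μ) {k : ℤ} {u v : (ℤ → X) → ℝ}
    (hu : StronglyMeasurable u) (hu2 : MemLp u 2 μ)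
    (hv : StronglyMeasurable v) (hv2 : MemLp v 2 μ)
    (hdu : DepLe k u) (hdv : DepGe (k + 1) v) :
    ∫ η, u η * v η ∂μ = (∫ η, u η ∂μ) * (∫ η, v η ∂μ) := by
  have hsm : AEStronglyMeasurable (fun η => u η * v η) μ :=
    hu.aestronglyMeasurable.mul hv.aestronglyMeasurable
  have hint : Integrable (fun η => u η * v η) μ := integrable_mul_L2 hu2 hv2
  calc ∫ η, u η * v η ∂μ
      = ∫ p, u (mrg (· ≤ k) p) * v (mrg (· ≤ k) p) ∂(μ.prod μ) := (integral_mrg hμ _ hsm).symm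
    _ = ∫ η, ∫ ξ, u (mrg (· ≤ k) (η, ξ)) * v (mrg (· ≤ k) (η, ξ)) ∂μ ∂μ :=
        MeasureTheory.integral_prod _ ((integrable_mrg hμ _ hsm).mpr hint)
    _ = ∫ η, u η * ∫ ξ, v ξ ∂μ ∂μ := by
        refine integral_congr_ae (Filter.Eventually.of_forall fun η => ?_)
        have h1 : ∀ ξ : ℤ → X,
            u (mrg (· ≤ k) (η, ξ)) * v (mrg (· ≤ k) (η, ξ)) = u η * v ξ := by
          intro ξ
          rw [hdu _ η (fun x hx => by simp [mrg, hx]),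
            hdv _ ξ (fun x hx => by simp only [mrg]; rw [if_neg (by omega)])]
        show (∫ ξ, u (mrg (· ≤ k) (η, ξ)) * v (mrg (· ≤ k) (η, ξ)) ∂μ)
            = u η * ∫ ξ, v ξ ∂μ
        rw [integral_congr_ae (Filter.Eventually.of_forall h1), integral_const_mul]
    _ = (∫ η, u η ∂μ) * ∫ ξ, v ξ ∂μ := integral_mul_const _ _

lemma memℒp_Qk (hμ : IsIIDProduct ν μ) (k : ℤ) {u : (ℤ → X) → ℝ}
    (hu : StronglyMeasurable u) (h2 : MemLp u 2 μ) : MemLp (Qk μ k u) 2 μ := by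
  have hsm : StronglyMeasurable (Qk μ k u) := sm_Qk k hu
  rw [memLp_two_iff_integrable_sq hsm.aestronglyMeasurable]
  have hu2 : Integrable (fun η => u η ^ 2) μ := h2.integrable_sq
  have hsq_sm : AEStronglyMeasurable (fun η => u η ^ 2) μ := by
    have := hu.mul hu
    exact (by simpa [sq, Pi.mul_def] using this : StronglyMeasurable fun η => u η ^ 2).aestronglyMeasurable
  have hprod : Integrable (fun p => u (mrg (· ≤ k) p) ^ 2) (μ.prod μ) :=
    (integrable_mrg hμ (· ≤ k) hsq_sm).mpr hu2
  have hQ2int : Integrable (fun η => ∫ ξ, u (mrg (· ≤ k) (η, ξ)) ^ 2 ∂μ) μ :=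
    hprod.integral_prod_left
  refine Integrable.mono' hQ2int ?_ ?_
  · have := hsm.mul hsm
    exact (by simpa [sq, Pi.mul_def] using this : StronglyMeasurable fun η => Qk μ k u η ^ 2).aestronglyMeasurable
  · filter_upwards [hprod.prod_right_ae] with η hη
    have hslice_sm : AEStronglyMeasurable (fun ξ => u (mrg (· ≤ k) (η, ξ))) μ :=
      (hu.comp_measurable ((measurable_mrg _).comp
        (measurable_const.prodMk measurable_id))).aestronglyMeasurable
    have hle := sq_integral_le μ hslice_sm hη
    rw [Real.norm_eq_abs, abs_of_nonneg (sq_nonneg _)]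
    exact hle

lemma memℒp_Pk (hμ : IsIIDProduct ν μ) (k : ℤ) {u : (ℤ → X) → ℝ}
    (hu : StronglyMeasurable u) (h2 : MemLp u 2 μ) : MemLp (Pk μ k u) 2 μ :=
  (memℒp_Qk hμ k hu h2).sub (memℒp_Qk hμ (k - 1) hu h2)

lemma orth (hμ : IsIIDProduct ν μ) {k : ℤ} {u v : (ℤ → X) → ℝ}
    (hu : StronglyMeasurable u) (hu2 : MemLp u 2 μ)
    (hv : StronglyMeasurable v) (hv2 : MemLp v 2 μ) :
    ∫ η, Pk μ k u η * Pk μ k v η ∂μ = ∫ η, Pk μ k u η * v η ∂μ := by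
  have hPsm : StronglyMeasurable (Pk μ k u) := sm_Pk k hu
  have hP2 : MemLp (Pk μ k u) 2 μ := memℒp_Pk hμ k hu hu2
  have hPdep : DepLe k (Pk μ k u) := by
    intro η η' hh
    rw [Pk, Pk, depLe_Qk k u η η' hh,
      depLe_Qk (k - 1) u η η' (fun x hx => hh x (by omega))]
  have e1 : ∫ η, Pk μ k u η * Qk μ k v η ∂μ = ∫ η, Pk μ k u η * v η ∂μ :=
    key hμ hv hv2 hPsm hP2 hPdep
  have hQv_sm : StronglyMeasurable (Qk μ (k - 1) v) := sm_Qk (k - 1) hv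
  have hQv2 : MemLp (Qk μ (k - 1) v) 2 μ := memℒp_Qk hμ (k - 1) hv hv2
  have hQvdep : DepLe k (Qk μ (k - 1) v) := (depLe_Qk (k - 1) v).mono (by omega)
  have e2 : ∫ η, Qk μ (k - 1) v η * Qk μ k u η ∂μ = ∫ η, Qk μ (k - 1) v η * u η ∂μ :=
    key hμ hu hu2 hQv_sm hQv2 hQvdep
  have e3 : ∫ η, Qk μ (k - 1) v η * Qk μ (k - 1) u η ∂μ
      = ∫ η, Qk μ (k - 1) v η * u η ∂μ :=
    key hμ hu hu2 hQv_sm hQv2 (depLe_Qk (k - 1) v)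
  have e4 : ∫ η, Pk μ k u η * Qk μ (k - 1) v η ∂μ = 0 := by
    have hcomm : ∀ η, Pk μ k u η * Qk μ (k - 1) v η
        = Qk μ (k - 1) v η * Qk μ k u η - Qk μ (k - 1) v η * Qk μ (k - 1) u η := by
      intro η; simp only [Pk]; ring
    rw [integral_congr_ae (Filter.Eventually.of_forall hcomm),
      integral_sub (integrable_mul_L2 hQv2 (memℒp_Qk hμ k hu hu2))
        (integrable_mul_L2 hQv2 (memℒp_Qk hμ (k - 1) hu hu2)), e2, e3, sub_self]
  have hsplit : ∀ η, Pk μ k u η * Pk μ k v η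
      = Pk μ k u η * Qk μ k v η - Pk μ k u η * Qk μ (k - 1) v η := by
    intro η; simp only [Pk]; ring
  rw [integral_congr_ae (Filter.Eventually.of_forall hsplit),
    integral_sub (integrable_mul_L2 hP2 (memℒp_Qk hμ k hv hv2))
      (integrable_mul_L2 hP2 (memℒp_Qk hμ (k - 1) hv hv2)), e1, e4, sub_zero]

end St12


open St12 in
/-- main theorem, d = 1: if `f ∈ L²(μ)` is local, mean zero, and
`∑_z ⟨f, τ_z f⟩ = 0` (a finitely supported sum), then `f = τg − g` for some local
mean-zero `g ∈ L²(μ)`, where `(τ_z f)(η) = f(τ_{-z}η) = f (fun x => η (x + z))`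
and `τ = τ_1`. -/
theorem stmt12 {X : Type*} [MeasurableSpace X] (ν : Measure X) [IsProbabilityMeasure ν]
    [TopologicalSpace.SeparableSpace (Lp ℝ 2 ν)]
    (μ : Measure (ℤ → X)) [IsProbabilityMeasure μ] (hμ : IsIIDProduct ν μ)
    (f : (ℤ → X) → ℝ) (hloc : IsLocal f) (hL : MemLp f 2 μ)
    (hmean : ∫ η, f η ∂μ = 0)
    (hker : ∑ᶠ z : ℤ, ∫ η, f η * f (fun x => η (x + z)) ∂μ = 0) :
    ∃ g : (ℤ → X) → ℝ, IsLocal g ∧ MemLp g 2 μ ∧ (∫ η, g η ∂μ = 0) ∧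
      f =ᵐ[μ] fun η => g (fun x => η (x + 1)) - g η := by
  obtain ⟨S, hS⟩ := hloc
  -- the box [a, b]
  have hTne : (insert 0 S).Nonempty := ⟨0, Finset.mem_insert_self 0 S⟩
  set a : ℤ := (insert 0 S).min' hTne with hadef
  set b : ℤ := (insert 0 S).max' hTne with hbdef
  have ha0 : a ≤ 0 := Finset.min'_le _ 0 (Finset.mem_insert_self 0 S)
  have hb0 : 0 ≤ b := Finset.le_max' _ 0 (Finset.mem_insert_self 0 S)
  have hSbox : ∀ x ∈ S, a ≤ x ∧ x ≤ b := fun x hx =>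
    ⟨Finset.min'_le _ x (Finset.mem_insert_of_mem hx),
     Finset.le_max' _ x (Finset.mem_insert_of_mem hx)⟩
  -- measurable local version f₀ of f
  set f₁ : (ℤ → X) → ℝ := hL.aestronglyMeasurable.mk f with hf₁def
  have hf₁sm : StronglyMeasurable f₁ := hL.aestronglyMeasurable.stronglyMeasurable_mk
  have hf₁ae : f =ᵐ[μ] f₁ := hL.aestronglyMeasurable.ae_eq_mk
  set f₀ : (ℤ → X) → ℝ := fun η => ∫ ξ, f₁ (mrg (fun x => a ≤ x ∧ x ≤ b) (η, ξ)) ∂μ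
    with hf₀def
  have hf₀sm : StronglyMeasurable f₀ :=
    (hf₁sm.comp_measurable (measurable_mrg _)).integral_prod_right'
  have hf₀loc : ∀ η η', (∀ x, a ≤ x → x ≤ b → η x = η' x) → f₀ η = f₀ η' := by
    intro η η' hh
    simp only [hf₀def]
    have h : ∀ ξ : ℤ → X, f₁ (mrg (fun x => a ≤ x ∧ x ≤ b) (η, ξ))
        = f₁ (mrg (fun x => a ≤ x ∧ x ≤ b) (η', ξ)) := by
      intro ξ; congr 1; funext x
      by_cases hx : a ≤ x ∧ x ≤ b
      · simp only [mrg, if_pos hx]; exact hh x hx.1 hx.2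
      · simp only [mrg, if_neg hx]
    exact integral_congr_ae (Filter.Eventually.of_forall h)
  have hmrgA : (μ.prod μ).map (mrg (X := X) (fun x => a ≤ x ∧ x ≤ b)) = μ := map_mrg hμ _
  have hcomp : (fun p => f₁ (mrg (fun x => a ≤ x ∧ x ≤ b) p))
      =ᵐ[μ.prod μ] (fun p => f (mrg (fun x => a ≤ x ∧ x ≤ b) p)) :=
    ae_eq_comp (measurable_mrg _).aemeasurable (by rw [hmrgA]; exact hf₁ae.symm)
  have hf₀ae : f₀ =ᵐ[μ] f := by
    filter_upwards [Measure.ae_ae_of_ae_prod hcomp] with η hη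
    have h1 : f₀ η = ∫ ξ, f (mrg (fun x => a ≤ x ∧ x ≤ b) (η, ξ)) ∂μ :=
      integral_congr_ae hη
    have h2 : ∀ ξ : ℤ → X, f (mrg (fun x => a ≤ x ∧ x ≤ b) (η, ξ)) = f η := by
      intro ξ
      refine hS _ _ fun x hx => ?_
      have hb := hSbox x hx
      simp only [mrg, if_pos hb]
    rw [h1, integral_congr_ae (Filter.Eventually.of_forall h2), integral_const]
    simp
  have hf₀L2 : MemLp f₀ 2 μ := hL.ae_eq hf₀ae.symm
  have hf₀mean : ∫ η, f₀ η ∂μ = 0 := by rw [integral_congr_ae hf₀ae, hmean]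
  have hf₀le : DepLe b f₀ := fun η η' hh => hf₀loc η η' fun x _ h2 => hh x h2
  have hf₀ge : DepGe a f₀ := fun η η' hh => hf₀loc η η' fun x h1 _ => hh x h1
  -- shifted copies
  set Lz : ℤ := b - a with hLzdef
  have hLz0 : 0 ≤ Lz := by omega
  set F : ℤ → (ℤ → X) → ℝ := fun z => f₀ ∘ shf z with hFdef
  have hFsm : ∀ z, StronglyMeasurable (F z) := fun z =>
    hf₀sm.comp_measurable (measurable_shf z)
  have hF2 : ∀ z, MemLp (F z) 2 μ := fun z => memℒp_shf hμ z hf₀L2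
  have hFle : ∀ z, DepLe (b + z) (F z) := fun z => hf₀le.shf z
  have hFge : ∀ z, DepGe (a + z) (F z) := fun z => hf₀ge.shf z
  have hFint : ∀ z, ∫ η, F z η ∂μ = 0 := fun z => by
    rw [show (∫ η, F z η ∂μ) = ∫ η, f₀ (shf z η) ∂μ from rfl, int_shf hμ z f₀, hf₀mean]
  have hF0 : F 0 = f₀ := by
    funext η; show f₀ (shf 0 η) = f₀ η
    congr 1; funext x; simp [shf]
  -- transported kernel condition
  have hcompz : ∀ z : ℤ, (f ∘ shf z) =ᵐ[μ] (f₀ ∘ shf z) := fun z =>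
    ae_eq_comp (f := shf z) (g := f) (g' := f₀) (measurable_shf z).aemeasurable
      (by rw [map_shf hμ z]; exact hf₀ae.symm)
  have hSker : ∀ z : ℤ, ∫ η, f₀ η * F z η ∂μ = ∫ η, f η * f (fun x => η (x + z)) ∂μ := by
    intro z
    refine integral_congr_ae ?_
    filter_upwards [hf₀ae, hcompz z] with η h1 h2
    have h2' : f (shf z η) = f₀ (shf z η) := h2
    show f₀ η * f₀ (shf z η) = f η * f (shf z η)
    rw [h1, h2']
  have hker' : ∑ᶠ z : ℤ, ∫ η, f₀ η * F z η ∂μ = 0 := by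
    rw [finsum_congr hSker]; exact hker
  have hsupp : ∀ z : ℤ, z ∉ Finset.Icc (-Lz) Lz → ∫ η, f₀ η * F z η ∂μ = 0 := by
    intro z hz
    rw [Finset.mem_Icc] at hz
    rcases (by omega : Lz < z ∨ z < -Lz) with h | h
    · rw [int_mul_indep hμ (k := b) hf₀sm hf₀L2 (hFsm z) (hF2 z) hf₀le
        ((hFge z).mono (by omega)), hf₀mean, zero_mul]
    · have hc : ∀ η, f₀ η * F z η = F z η * f₀ η := fun η => mul_comm _ _
      rw [integral_congr_ae (Filter.Eventually.of_forall hc),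
        int_mul_indep hμ (k := b + z) (hFsm z) (hF2 z) hf₀sm hf₀L2 (hFle z)
          (hf₀ge.mono (by omega)), hFint z, zero_mul]
  have hsum0 : ∑ w ∈ Finset.Icc (-Lz) Lz, ∫ η, f₀ η * F w η ∂μ = 0 := by
    rw [← finsum_eq_sum_of_support_subset _ (fun z hz => by
      by_contra hnot
      exact hz (hsupp z hnot))]
    exact hker'
  -- covariances
  set cc : ℤ → ℤ → ℝ := fun k w => ∫ η, Pk μ k f₀ η * Pk μ k (F w) η ∂μ with hccdef
  have hccvan : ∀ k w : ℤ, (b + w < k ∨ k < a + w) → cc k w = 0 := by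
    intro k w h
    have hzero : ∀ η, Pk μ k (F w) η = 0 := by
      rcases h with h | h
      · exact fun η => Pk_of_depLe ((hFle w).mono (by omega)) η
      · exact fun η => Pk_of_depGe ((hFge w).mono (by omega)) η
    have hz2 : ∀ η, Pk μ k f₀ η * Pk μ k (F w) η = 0 := fun η => by
      rw [hzero η, mul_zero]
    simp only [hccdef]
    rw [integral_congr_ae (Filter.Eventually.of_forall hz2), integral_zero]
  have horth : ∀ k w : ℤ, cc k w = ∫ η, Pk μ k f₀ η * F w η ∂μ := fun k w =>
    orth hμ hf₀sm hf₀L2 (hFsm w) (hF2 w)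
  have htel_pt : ∀ η, ∑ k ∈ Finset.Icc a b, Pk μ k f₀ η = f₀ η := by
    intro η
    have hcast : ((Lz.toNat : ℤ)) = Lz := Int.toNat_of_nonneg hLz0
    have h := telescope_Icc (fun k => Qk μ k f₀ η) a Lz.toNat
    rw [hcast, show a + Lz = b by omega] at h
    have hdep : DepGe (a - 1 + 1) f₀ := by rw [sub_add_cancel]; exact hf₀ge
    rw [Qk_of_depLe hf₀le η, Qk_of_depGe hdep η, hf₀mean, sub_zero] at h
    simpa only [Pk] using h
  have htel : ∀ w : ℤ, ∑ k ∈ Finset.Icc a b, cc k w = ∫ η, f₀ η * F w η ∂μ := by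
    intro w
    have hPint : ∀ k : ℤ, Integrable (fun η => Pk μ k f₀ η * F w η) μ := fun k =>
      integrable_mul_L2 (memℒp_Pk hμ k hf₀sm hf₀L2) (hF2 w)
    calc ∑ k ∈ Finset.Icc a b, cc k w
        = ∑ k ∈ Finset.Icc a b, ∫ η, Pk μ k f₀ η * F w η ∂μ :=
          Finset.sum_congr rfl fun k _ => horth k w
      _ = ∫ η, ∑ k ∈ Finset.Icc a b, Pk μ k f₀ η * F w η ∂μ :=
          (integral_finset_sum _ fun k _ => hPint k).symm
      _ = ∫ η, f₀ η * F w η ∂μ := by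
          refine integral_congr_ae (Filter.Eventually.of_forall fun η => ?_)
          show ∑ k ∈ Finset.Icc a b, Pk μ k f₀ η * F w η = f₀ η * F w η
          rw [← Finset.sum_mul, htel_pt η]
  -- the gradient candidate and defect
  set g : (ℤ → X) → ℝ := fun η => -∑ z ∈ Finset.Icc (0 : ℤ) Lz, Qk μ (b - 1) (F z) η
    with hgdef
  set D : (ℤ → X) → ℝ := fun η => ∑ z ∈ Finset.Icc (0 : ℤ) Lz, Pk μ b (F z) η with hDdef
  have hFz1 : ∀ z : ℤ, F z ∘ shf 1 = F (z + 1) := by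
    intro z; funext η
    show f₀ (shf z (shf 1 η)) = f₀ (shf (z + 1) η)
    rw [shf_shf, show (1 : ℤ) + z = z + 1 by ring]
  have hpoint : ∀ η, f₀ η = (g (shf 1 η) - g η) + D η := by
    intro η
    have hg1 : g (shf 1 η) = -∑ z ∈ Finset.Icc (0 : ℤ) Lz, Qk μ b (F (z + 1)) η := by
      simp only [hgdef]
      congr 1
      refine Finset.sum_congr rfl fun z _ => ?_
      have h := Qk_shf hμ (b - 1) 1 (hFsm z) η
      rw [show b - 1 + 1 = b by ring, hFz1 z] at h
      exact h.symm
    have hTtel : ∑ z ∈ Finset.Icc (0 : ℤ) Lz, (Qk μ b (F (z + 1)) η - Qk μ b (F z) η)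
        = Qk μ b (F (Lz + 1)) η - Qk μ b (F 0) η := by
      have hcast : ((Lz.toNat : ℤ)) = Lz := Int.toNat_of_nonneg hLz0
      have h := telescope_Icc (fun k => Qk μ b (F (k + 1)) η) 0 Lz.toNat
      rw [hcast, zero_add, zero_sub] at h
      calc ∑ z ∈ Finset.Icc (0 : ℤ) Lz, (Qk μ b (F (z + 1)) η - Qk μ b (F z) η)
          = ∑ z ∈ Finset.Icc (0 : ℤ) Lz,
              (Qk μ b (F (z + 1)) η - Qk μ b (F (z - 1 + 1)) η) := by
            refine Finset.sum_congr rfl fun z _ => ?_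
            rw [sub_add_cancel]
        _ = Qk μ b (F (Lz + 1)) η - Qk μ b (F (-1 + 1)) η := h
        _ = Qk μ b (F (Lz + 1)) η - Qk μ b (F 0) η := by norm_num
    have hT0 : Qk μ b (F 0) η = f₀ η := by rw [hF0]; exact Qk_of_depLe hf₀le η
    have hTtop : Qk μ b (F (Lz + 1)) η = 0 := by
      rw [Qk_of_depGe ((hFge (Lz + 1)).mono (by omega)) η]
      exact hFint (Lz + 1)
    rw [hg1]
    simp only [hgdef, hDdef, Pk]
    rw [Finset.sum_sub_distrib] at hTtel
    rw [Finset.sum_sub_distrib]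
    rw [hT0, hTtop] at hTtel
    linarith [hTtel]
  -- ∫ D² = 0
  have hPP_int : ∀ z w : ℤ, Integrable (fun η => Pk μ b (F z) η * Pk μ b (F w) η) μ :=
    fun z w => integrable_mul_L2 (memℒp_Pk hμ b (hFsm z) (hF2 z))
      (memℒp_Pk hμ b (hFsm w) (hF2 w))
  have hshift : ∀ z w : ℤ, ∫ η, Pk μ b (F z) η * Pk μ b (F w) η ∂μ = cc (b - z) (w - z) := by
    intro z w
    have hwz : F w = F (w - z) ∘ shf z := by
      funext η'
      show f₀ (shf w η') = f₀ (shf (w - z) (shf z η'))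
      rw [shf_shf, show z + (w - z) = w by ring]
    have hz' : ∀ η, Pk μ b (F z) η = Pk μ (b - z) f₀ (shf z η) := by
      intro η
      have h := Pk_shf hμ (b - z) z hf₀sm η
      rw [show b - z + z = b by ring] at h
      exact h
    have hw' : ∀ η, Pk μ b (F w) η = Pk μ (b - z) (F (w - z)) (shf z η) := by
      intro η
      have h := Pk_shf hμ (b - z) z (hFsm (w - z)) η
      rw [show b - z + z = b by ring] at h
      rw [hwz]
      exact h
    calc ∫ η, Pk μ b (F z) η * Pk μ b (F w) η ∂μ
        = ∫ η, (fun η' => Pk μ (b - z) f₀ η' * Pk μ (b - z) (F (w - z)) η') (shf z η) ∂μ := by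
          refine integral_congr_ae (Filter.Eventually.of_forall fun η => ?_)
          show Pk μ b (F z) η * Pk μ b (F w) η
              = Pk μ (b - z) f₀ (shf z η) * Pk μ (b - z) (F (w - z)) (shf z η)
          rw [hz' η, hw' η]
      _ = ∫ η', Pk μ (b - z) f₀ η' * Pk μ (b - z) (F (w - z)) η' ∂μ :=
          int_shf hμ z (fun η' => Pk μ (b - z) f₀ η' * Pk μ (b - z) (F (w - z)) η')
      _ = cc (b - z) (w - z) := rfl
  have hinner : ∀ z ∈ Finset.Icc (0 : ℤ) Lz,
      ∑ w ∈ Finset.Icc (0 : ℤ) Lz, cc (b - z) (w - z)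
        = ∑ u ∈ Finset.Icc (-Lz) Lz, cc (b - z) u := by
    intro z hz
    rw [Finset.mem_Icc] at hz
    have hmapIcc : Finset.Icc (-z) (Lz - z) = (Finset.Icc (0 : ℤ) Lz).map
        (addRightEmbedding (-z)) := by
      rw [Finset.map_add_right_Icc]
      congr 1 <;> ring
    have hmap : ∑ w ∈ Finset.Icc (0 : ℤ) Lz, cc (b - z) (w - z)
        = ∑ u ∈ Finset.Icc (-z) (Lz - z), cc (b - z) u := by
      rw [hmapIcc, Finset.sum_map]
      refine Finset.sum_congr rfl fun w _ => ?_
      simp [addRightEmbedding, sub_eq_add_neg]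
    rw [hmap]
    refine Finset.sum_subset (fun u hu => ?_) (fun u hu hnot => ?_)
    · rw [Finset.mem_Icc] at *; omega
    · rw [Finset.mem_Icc] at hu hnot
      exact hccvan _ _ (by omega)
  have houter : ∀ u : ℤ, ∑ z ∈ Finset.Icc (0 : ℤ) Lz, cc (b - z) u
      = ∑ k ∈ Finset.Icc a b, cc k u := by
    intro u
    refine Finset.sum_bij' (i := fun z _ => b - z) (j := fun k _ => b - k)
      ?_ ?_ ?_ ?_ ?_
    · intro zz hzz
      show b - zz ∈ Finset.Icc a b
      rw [Finset.mem_Icc] at *; omega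
    · intro k hk
      show b - k ∈ Finset.Icc (0 : ℤ) Lz
      rw [Finset.mem_Icc] at *; omega
    · intro zz _
      show b - (b - zz) = zz
      omega
    · intro k _
      show b - (b - k) = k
      omega
    · intro zz _; rfl
  have hDint : ∫ η, D η ^ 2 ∂μ = 0 := by
    have hexp : ∀ η, D η ^ 2 = ∑ z ∈ Finset.Icc (0 : ℤ) Lz, ∑ w ∈ Finset.Icc (0 : ℤ) Lz,
        Pk μ b (F z) η * Pk μ b (F w) η := by
      intro η
      simp only [hDdef]
      rw [sq, Finset.sum_mul_sum]
    calc ∫ η, D η ^ 2 ∂μ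
        = ∑ z ∈ Finset.Icc (0 : ℤ) Lz, ∑ w ∈ Finset.Icc (0 : ℤ) Lz,
            ∫ η, Pk μ b (F z) η * Pk μ b (F w) η ∂μ := by
          rw [integral_congr_ae (Filter.Eventually.of_forall hexp),
            integral_finset_sum _ (fun z _ => integrable_finset_sum _ fun w _ => hPP_int z w)]
          exact Finset.sum_congr rfl fun z _ => integral_finset_sum _ fun w _ => hPP_int z w
      _ = ∑ z ∈ Finset.Icc (0 : ℤ) Lz, ∑ w ∈ Finset.Icc (0 : ℤ) Lz, cc (b - z) (w - z) :=
          Finset.sum_congr rfl fun z _ => Finset.sum_congr rfl fun w _ => hshift z w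
      _ = ∑ z ∈ Finset.Icc (0 : ℤ) Lz, ∑ u ∈ Finset.Icc (-Lz) Lz, cc (b - z) u :=
          Finset.sum_congr rfl hinner
      _ = ∑ u ∈ Finset.Icc (-Lz) Lz, ∑ z ∈ Finset.Icc (0 : ℤ) Lz, cc (b - z) u :=
          Finset.sum_comm
      _ = ∑ u ∈ Finset.Icc (-Lz) Lz, ∑ k ∈ Finset.Icc a b, cc k u :=
          Finset.sum_congr rfl fun u _ => houter u
      _ = ∑ u ∈ Finset.Icc (-Lz) Lz, ∫ η, f₀ η * F u η ∂μ :=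
          Finset.sum_congr rfl fun u _ => htel u
      _ = 0 := hsum0
  have hDsm : StronglyMeasurable D := by
    simp only [hDdef]
    exact Finset.stronglyMeasurable_fun_sum _ fun z _ => sm_Pk (μ := μ) b (hFsm z)
  have hD2 : MemLp D 2 μ := by
    simp only [hDdef]
    exact memLp_finset_sum _ fun z _ => memℒp_Pk hμ b (hFsm z) (hF2 z)
  have hD0 : ∀ᵐ η ∂μ, D η = 0 := by
    have h0 : (fun η => D η ^ 2) =ᵐ[μ] 0 :=
      (integral_eq_zero_iff_of_nonneg (fun η => sq_nonneg (D η)) hD2.integrable_sq).mp hDint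
    filter_upwards [h0] with η hη
    have : D η ^ 2 = 0 := hη
    exact pow_eq_zero_iff two_ne_zero |>.mp this
  -- conclusion
  refine ⟨g, ⟨Finset.Icc a b, fun η η' hh => ?_⟩, ?_, ?_, ?_⟩
  · simp only [hgdef]
    congr 1
    refine Finset.sum_congr rfl fun z hz => ?_
    rw [Finset.mem_Icc] at hz
    exact locOn_Qk (c := a) (k := b - 1) ((hFge z).mono (by omega)) η η'
      (fun x h1 h2 => hh x (by rw [Finset.mem_Icc]; omega))
  · simp only [hgdef]
    have h := (memLp_finset_sum (Finset.Icc (0 : ℤ) Lz)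
      (fun z (_ : z ∈ Finset.Icc (0 : ℤ) Lz) => memℒp_Qk hμ (b - 1) (hFsm z) (hF2 z))).neg
    exact h.ae_eq (Filter.Eventually.of_forall fun η => rfl)
  · simp only [hgdef]
    rw [integral_neg, integral_finset_sum _
      (fun z _ => (memℒp_Qk hμ (b - 1) (hFsm z) (hF2 z)).integrable one_le_two)]
    rw [Finset.sum_eq_zero (fun z _ => by
      rw [int_Qk hμ (b - 1) (hFsm z) ((hF2 z).integrable one_le_two)]
      exact hFint z)]
    exact neg_zero
  · filter_upwards [hf₀ae, hD0] with η h1 h2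
    show f η = g (shf 1 η) - g η
    rw [← h1, hpoint η, h2, add_zero]
end

section
/- Let H be a Hilbert space, (h_x)_{x ∈ ℤ^d} an orthonormal family, (a_x) finitely supported with ∑ a_x = 0 and support contained in a hypercube of cardinality s, and ψ a nearest-neighbor Hamiltonian path through that hypercube. Define for each direction α: g_α = ∑_{k=2}^{s} (∑_{l=k}^{s} a_{ψ(l)}) [h_{ψ(k−1)} 1_{ψ(k)=ψ(k−1)+e_α} − h_{ψ(k)} 1_{ψ(k−1)=ψ(k)+e_α}]. Then ∑_{α=1}^d ‖g_α‖² ≤ s² ∑_x a_x². -/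
open Finset

lemma pyth {H : Type*} [NormedAddCommGroup H] [InnerProductSpace ℝ H]
    {ι : Type*} (t : Finset ι) (f : ι → H)
    (ho : ∀ i ∈ t, ∀ j ∈ t, i ≠ j → inner ℝ (f i) (f j) = (0:ℝ)) :
    ‖∑ i ∈ t, f i‖ ^ 2 = ∑ i ∈ t, ‖f i‖ ^ 2 := by
  rw [← real_inner_self_eq_norm_sq, sum_inner]
  refine Finset.sum_congr rfl fun i hi => ?_
  rw [inner_sum, Finset.sum_eq_single i (fun j hj hne => ho i hi j hj (Ne.symm hne))
    (fun hni => absurd hi hni)]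
  exact real_inner_self_eq_norm_sq (f i)

lemma single_inj {d : ℕ} {α β : Fin d} (h : (Pi.single α 1 : Fin d → ℤ) = Pi.single β 1) :
    α = β := by
  by_contra hne
  have := congrFun h α
  simp [Pi.single_apply, Ne.symm hne] at this

lemma single_ne_neg {d : ℕ} (α β : Fin d) :
    (Pi.single α 1 : Fin d → ℤ) ≠ -Pi.single β 1 := by
  intro h
  have := congrFun h α
  rcases eq_or_ne β α with rfl | hne
  · simp [Pi.single_apply] at this
  · simp [Pi.single_apply, hne] at this


/-- let `(h_x)_{x ∈ ℤ^d}` be orthonormal in a Hilbert space, `a` finitely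
supported with sum zero and support contained in the image of a nearest-neighbor
injective path `ψ : {1,…,s} → ℤ^d`.  With
`g_α = ∑_{k=2}^s (∑_{l=k}^s a_{ψ(l)}) [h_{ψ(k−1)} 1_{ψ(k)=ψ(k−1)+e_α} − h_{ψ(k)} 1_{ψ(k−1)=ψ(k)+e_α}]`,
one has `∑_α ‖g_α‖² ≤ s² ∑_x a_x²`. -/
theorem stmt16 {d : ℕ} {H : Type*} [NormedAddCommGroup H] [InnerProductSpace ℝ H]
    (h : (Fin d → ℤ) → H) (hortho : Orthonormal ℝ h)
    (a : (Fin d → ℤ) →₀ ℝ) (hsum : ∑ x ∈ a.support, a x = 0)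
    (s : ℕ) (ψ : ℕ → (Fin d → ℤ))
    (hinj : Set.InjOn ψ (Set.Icc 1 s))
    (hcover : ∀ x ∈ a.support, ∃ k ∈ Finset.Icc 1 s, ψ k = x)
    (hstep : ∀ k : ℕ, 2 ≤ k → k ≤ s → ∃ α : Fin d,
      ψ k = ψ (k - 1) + Pi.single α 1 ∨ ψ k = ψ (k - 1) - Pi.single α 1)
    (g : Fin d → H)
    (hg : ∀ α : Fin d, g α =
      ∑ k ∈ Finset.Icc 2 s, (∑ l ∈ Finset.Icc k s, a (ψ l)) •
        ((if ψ k = ψ (k - 1) + Pi.single α 1 then h (ψ (k - 1)) else 0)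
          - (if ψ (k - 1) = ψ k + Pi.single α 1 then h (ψ k) else 0))) :
    ∑ α : Fin d, ‖g α‖ ^ 2 ≤ (s : ℝ) ^ 2 * ∑ x ∈ a.support, (a x) ^ 2 := by
  classical
  set c : ℕ → ℝ := fun k => ∑ l ∈ Finset.Icc k s, a (ψ l) with hc
  set D : Fin d → ℕ → H := fun α k =>
      (if ψ k = ψ (k - 1) + Pi.single α 1 then h (ψ (k - 1)) else 0)
        - (if ψ (k - 1) = ψ k + Pi.single α 1 then h (ψ k) else 0) with hD
  set S : ℝ := ∑ x ∈ a.support, (a x) ^ 2 with hS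
  have hS0 : 0 ≤ S := Finset.sum_nonneg fun x _ => sq_nonneg _
  -- injectivity helper
  have hinj' : ∀ i j : ℕ, 1 ≤ i → i ≤ s → 1 ≤ j → j ≤ s → ψ i = ψ j → i = j := by
    intro i j hi1 hi2 hj1 hj2 he
    exact hinj ⟨hi1, hi2⟩ ⟨hj1, hj2⟩ he
  -- orthogonality of summands of g α across k
  have horth : ∀ α : Fin d, ∀ k ∈ Finset.Icc 2 s, ∀ k' ∈ Finset.Icc 2 s, k ≠ k' →
      inner ℝ (c k • D α k) (c k' • D α k') = (0:ℝ) := by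
    intro α k hk k' hk' hne
    simp only [Finset.mem_Icc] at hk hk'
    obtain ⟨hk2, hks⟩ := hk
    obtain ⟨hk'2, hk's⟩ := hk'
    have hAB : ∀ m m' : ℕ, 2 ≤ m → m ≤ s → 2 ≤ m' → m' ≤ s →
        ψ m = ψ (m-1) + Pi.single α 1 → ψ (m'-1) = ψ m' + Pi.single α 1 →
        ψ (m-1) ≠ ψ m' := by
      intro m m' hm2 hms hm'2 hm's h1 h2 heq
      have hm1 : m - 1 = m' := hinj' (m-1) m' (by omega) (by omega) (by omega) hm's heq
      have : ψ m = ψ (m'-1) := by rw [h1, heq, ← h2]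
      have := hinj' m (m'-1) (by omega) hms (by omega) (by omega) this
      omega
    rw [real_inner_smul_left, real_inner_smul_right]
    have hz : inner ℝ (D α k) (D α k') = (0:ℝ) := by
      simp only [hD]
      rw [inner_sub_left, inner_sub_right, inner_sub_right]
      have z1 : inner ℝ (if ψ k = ψ (k - 1) + Pi.single α 1 then h (ψ (k - 1)) else 0)
          (if ψ k' = ψ (k' - 1) + Pi.single α 1 then h (ψ (k' - 1)) else 0) = (0:ℝ) := by
        split_ifs with p q
        · refine hortho.2 fun he => ?_
          have := hinj' (k-1) (k'-1) (by omega) (by omega) (by omega) (by omega) he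
          omega
        all_goals simp
      have z2 : inner ℝ (if ψ k = ψ (k - 1) + Pi.single α 1 then h (ψ (k - 1)) else 0)
          (if ψ (k' - 1) = ψ k' + Pi.single α 1 then h (ψ k') else 0) = (0:ℝ) := by
        split_ifs with p q
        · exact hortho.2 (hAB k k' hk2 hks hk'2 hk's p q)
        all_goals simp
      have z3 : inner ℝ (if ψ (k - 1) = ψ k + Pi.single α 1 then h (ψ k) else 0)
          (if ψ k' = ψ (k' - 1) + Pi.single α 1 then h (ψ (k' - 1)) else 0) = (0:ℝ) := by
        split_ifs with p q
        · exact hortho.2 fun he => hAB k' k hk'2 hk's hk2 hks q p he.symm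
        all_goals simp
      have z4 : inner ℝ (if ψ (k - 1) = ψ k + Pi.single α 1 then h (ψ k) else 0)
          (if ψ (k' - 1) = ψ k' + Pi.single α 1 then h (ψ k') else 0) = (0:ℝ) := by
        split_ifs with p q
        · refine hortho.2 fun he => hne (hinj' k k' (by omega) hks (by omega) hk's he)
        all_goals simp
      rw [z1, z2, z3, z4]; ring
    rw [hz]; ring
  -- norm of each g α
  have hnorm : ∀ α : Fin d, ‖g α‖ ^ 2 = ∑ k ∈ Finset.Icc 2 s, (c k)^2 * ‖D α k‖^2 := by
    intro α
    rw [hg α]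
    rw [pyth (Finset.Icc 2 s) (fun k => c k • D α k) (horth α)]
    refine Finset.sum_congr rfl fun k _ => ?_
    rw [norm_smul]
    simp [mul_pow, sq_abs]
  -- pointwise: sum over α of ‖D α k‖² ≤ 1
  have hDsum : ∀ k : ℕ, 2 ≤ k → k ≤ s → ∑ α : Fin d, ‖D α k‖^2 ≤ 1 := by
    intro k hk2 hks
    have hnotboth : ∀ α : Fin d, ¬ (ψ k = ψ (k-1) + Pi.single α 1 ∧
        ψ (k-1) = ψ k + Pi.single α 1) := by
      rintro α ⟨p, q⟩
      rw [q] at p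
      have : (Pi.single α 1 : Fin d → ℤ) = -Pi.single α 1 := by
        have := add_right_cancel (a := ψ k) (b := Pi.single α 1 + Pi.single α 1) (c := 0)
        have h0 : ψ k + (Pi.single α 1 + Pi.single α 1) = ψ k + 0 := by
          rw [add_zero, ← add_assoc, ← p]
        have := add_left_cancel h0
        funext i
        have := congrFun this i
        simp only [Pi.add_apply, Pi.zero_apply] at this
        simp only [Pi.neg_apply]
        omega
      exact single_ne_neg α α this
    have hval : ∀ α : Fin d, ‖D α k‖^2 =
        if (ψ k = ψ (k-1) + Pi.single α 1 ∨ ψ (k-1) = ψ k + Pi.single α 1) then 1 else 0 := by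
      intro α
      simp only [hD]
      by_cases p : ψ k = ψ (k-1) + Pi.single α 1
      · have q : ¬ ψ (k-1) = ψ k + Pi.single α 1 := fun q => hnotboth α ⟨p, q⟩
        rw [if_pos p, if_neg q, sub_zero, if_pos (Or.inl p), hortho.1 (ψ (k-1)), one_pow]
      · by_cases q : ψ (k-1) = ψ k + Pi.single α 1
        · rw [if_neg p, if_pos q, zero_sub, norm_neg, if_pos (Or.inr q), hortho.1 (ψ k), one_pow]
        · rw [if_neg p, if_neg q, sub_zero, norm_zero,
            if_neg (by rintro (h'|h') <;> [exact p h'; exact q h'])]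
          norm_num
    calc ∑ α : Fin d, ‖D α k‖^2
        = ∑ α : Fin d, (if (ψ k = ψ (k-1) + Pi.single α 1 ∨ ψ (k-1) = ψ k + Pi.single α 1)
            then (1:ℝ) else 0) := Finset.sum_congr rfl fun α _ => hval α
      _ = (Finset.univ.filter (fun α : Fin d =>
            ψ k = ψ (k-1) + Pi.single α 1 ∨ ψ (k-1) = ψ k + Pi.single α 1)).card := by
            rw [Finset.sum_boole]
      _ ≤ 1 := by
            norm_cast
            rw [Finset.card_le_one]
            intro α hα β hβ
            simp only [Finset.mem_filter] at hα hβ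
            rcases hα.2 with p | p <;> rcases hβ.2 with q | q
            · exact single_inj (add_left_cancel (p ▸ q : ψ (k-1) + Pi.single α 1 = ψ (k-1) + Pi.single β 1))
            · exfalso
              rw [q] at p
              have h0 : ψ k + (Pi.single β 1 + Pi.single α 1) = ψ k + 0 := by
                rw [add_zero, ← add_assoc, ← p]
              have h1 := add_left_cancel h0
              refine single_ne_neg α β ?_
              funext i
              have := congrFun h1 i
              simp only [Pi.add_apply, Pi.zero_apply] at this
              simp only [Pi.neg_apply]
              omega
            · exfalso
              rw [p] at q
              have h0 : ψ k + (Pi.single α 1 + Pi.single β 1) = ψ k + 0 := by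
                rw [add_zero, ← add_assoc, ← q]
              have h1 := add_left_cancel h0
              refine single_ne_neg β α ?_
              funext i
              have := congrFun h1 i
              simp only [Pi.add_apply, Pi.zero_apply] at this
              simp only [Pi.neg_apply]
              omega
            · exact single_inj (add_left_cancel (p ▸ q : ψ k + Pi.single α 1 = ψ k + Pi.single β 1))
  -- coefficient bound
  have hck : ∀ k : ℕ, 2 ≤ k → (c k)^2 ≤ (s:ℝ) * S := by
    intro k hk2
    have h1 : (c k)^2 ≤ (Finset.Icc k s).card * ∑ l ∈ Finset.Icc k s, (a (ψ l))^2 :=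
      sq_sum_le_card_mul_sum_sq
    have h2 : ∑ l ∈ Finset.Icc k s, (a (ψ l))^2 ≤ ∑ l ∈ Finset.Icc 1 s, (a (ψ l))^2 := by
      apply Finset.sum_le_sum_of_subset_of_nonneg
      · intro l hl
        simp only [Finset.mem_Icc] at hl ⊢
        omega
      · intro l _ _; exact sq_nonneg _
    have h3 : ∑ l ∈ Finset.Icc 1 s, (a (ψ l))^2 = ∑ x ∈ (Finset.Icc 1 s).image ψ, (a x)^2 := by
      rw [Finset.sum_image]
      intro i hi j hj he
      simp only [Finset.coe_Icc, Set.mem_Icc, Finset.mem_coe, Finset.mem_Icc] at hi hj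
      exact hinj' i j hi.1 hi.2 hj.1 hj.2 he
    have h4 : ∑ x ∈ (Finset.Icc 1 s).image ψ, (a x)^2 ≤ S := by
      rw [hS]
      rw [← Finset.sum_subset (Finset.inter_subset_left :
        ((Finset.Icc 1 s).image ψ) ∩ a.support ⊆ (Finset.Icc 1 s).image ψ)]
      · apply Finset.sum_le_sum_of_subset_of_nonneg Finset.inter_subset_right
        intro x _ _; exact sq_nonneg _
      · intro x _ hx
        have : x ∉ a.support := fun hxs => hx (Finset.mem_inter.2 ⟨‹_›, hxs⟩)
        rw [Finsupp.notMem_support_iff] at this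
        simp [this]
    have hcard : ((Finset.Icc k s).card : ℝ) ≤ (s:ℝ) := by
      rw [Nat.card_Icc]
      exact_mod_cast Nat.cast_le.mpr (by omega : s + 1 - k ≤ s)
    have h5 : ∑ l ∈ Finset.Icc k s, (a (ψ l))^2 ≤ S := h2.trans (h3.trans_le h4)
    calc (c k)^2 ≤ (Finset.Icc k s).card * ∑ l ∈ Finset.Icc k s, (a (ψ l))^2 := h1
      _ ≤ (s:ℝ) * S :=
          mul_le_mul hcard h5 (Finset.sum_nonneg fun l _ => sq_nonneg _) (Nat.cast_nonneg s)
  -- put everything together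
  calc ∑ α : Fin d, ‖g α‖ ^ 2
      = ∑ α : Fin d, ∑ k ∈ Finset.Icc 2 s, (c k)^2 * ‖D α k‖^2 :=
        Finset.sum_congr rfl fun α _ => hnorm α
    _ = ∑ k ∈ Finset.Icc 2 s, (c k)^2 * ∑ α : Fin d, ‖D α k‖^2 := by
        rw [Finset.sum_comm]
        exact Finset.sum_congr rfl fun k _ => (Finset.mul_sum _ _ _).symm
    _ ≤ ∑ k ∈ Finset.Icc 2 s, (c k)^2 := by
        apply Finset.sum_le_sum
        intro k hk
        simp only [Finset.mem_Icc] at hk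
        have := hDsum k hk.1 hk.2
        nlinarith [sq_nonneg (c k), Finset.sum_nonneg (fun α (_ : α ∈ Finset.univ) => sq_nonneg ‖D α k‖)]
    _ ≤ ∑ k ∈ Finset.Icc 2 s, (s:ℝ) * S := Finset.sum_le_sum fun k hk =>
        hck k (Finset.mem_Icc.mp hk).1
    _ = (Finset.Icc 2 s).card * ((s:ℝ) * S) := by rw [Finset.sum_const, nsmul_eq_mul]
    _ ≤ (s:ℝ) * ((s:ℝ) * S) := by
        apply mul_le_mul_of_nonneg_right _ (mul_nonneg (Nat.cast_nonneg s) hS0)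
        rw [Nat.card_Icc]
        exact_mod_cast Nat.cast_le.mpr (by omega : s + 1 - 2 ≤ s)
    _ = (s:ℝ)^2 * S := by ring
end
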